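/- Let ħ > 0, m > 0 and g ∈ ℝ be constants, and let Ψ : ℝ × ℝ → ℂ be twice continuously differentiable and satisfy the free Schrödinger equation i·ħ·∂_t Ψ(x,t) = −(ħ²/(2m))·∂_x² Ψ(x,t) for all (x,t). Define Ψ̃(x,t) = Ψ(x − (1/2)·g·t², t) · exp( (i·m/ħ) · ( g·t·x − (1/6)·g²·t³ ) ). Then Ψ̃ satisfies the Schrödinger equation with a uniform gravitational potential: i·ħ·∂_t Ψ̃(x,t) = −(ħ²/(2m))·∂_x² Ψ̃(x,t) − m·g·x·Ψ̃(x,t) for all (x,t). -/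

import Mathlib

open Complex

/-- The equivalence-principle statement: if `Ψ` solves the free Schrödinger equation,
then the wave function transformed to a uniformly accelerating frame,
`Ψ̃(x,t) = Ψ(x − ½gt², t) · exp((i m/hbar)(g·t·x − g²t³/6))`,
solves the Schrödinger equation with the uniform gravitational potential `−m·g·x`.
Functions of two variables are curried, `F x t`; `∂_t F (x,t) = deriv (F x) t`,
`∂_x F (x,t) = deriv (fun y => F y t) x`. -/
theorem free_schrodinger_accelerating_frame_gravity
    (hbar m g : ℝ) (hbar_pos : 0 < hbar) (hm : 0 < m)
    (Ψ : ℝ → ℝ → ℂ) (hΨ : ContDiff ℝ 2 (Function.uncurry Ψ))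
    (hSE : ∀ x t, Complex.I * (hbar : ℂ) * deriv (fun s => Ψ x s) t
        = -((hbar : ℂ) ^ 2 / (2 * (m : ℂ))) * deriv (deriv (fun y => Ψ y t)) x)
    (Ψt : ℝ → ℝ → ℂ)
    (hΨt : ∀ x t, Ψt x t = Ψ (x - (1 / 2) * g * t ^ 2) t
        * Complex.exp (Complex.I * ((m / hbar) *
            (g * t * x - (1 / 6) * g ^ 2 * t ^ 3) : ℝ))) :
    ∀ x t, Complex.I * (hbar : ℂ) * deriv (fun s => Ψt x s) t
        = -((hbar : ℂ) ^ 2 / (2 * (m : ℂ))) * deriv (deriv (fun y => Ψt y t)) x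
          - ((m * g * x : ℝ) : ℂ) * Ψt x t := by
  have hbar0 : (hbar : ℂ) ≠ 0 := Complex.ofReal_ne_zero.2 hbar_pos.ne'
  have hm0 : (m : ℂ) ≠ 0 := Complex.ofReal_ne_zero.2 hm.ne'
  have hFd : Differentiable ℝ (Function.uncurry Ψ) := hΨ.differentiable (by norm_num)
  have hF'd : Differentiable ℝ (fderiv ℝ (Function.uncurry Ψ)) :=
    (hΨ.fderiv_right (by norm_num : (1 : WithTop ℕ∞) + 1 ≤ 2)).differentiable one_ne_zero
  -- first partial derivatives
  have hAx : ∀ y s : ℝ, HasDerivAt (fun z => Ψ z s)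
      (fderiv ℝ (Function.uncurry Ψ) (y, s) (1, 0)) y := by
    intro y s
    have h := (hFd (y, s)).hasFDerivAt.comp_hasDerivAt y
      ((hasDerivAt_id y).prodMk (hasDerivAt_const y s))
    simpa [Function.comp_def, Function.uncurry] using h
  have hBt : ∀ y s : ℝ, HasDerivAt (fun r => Ψ y r)
      (fderiv ℝ (Function.uncurry Ψ) (y, s) (0, 1)) s := by
    intro y s
    have h := (hFd (y, s)).hasFDerivAt.comp_hasDerivAt s
      ((hasDerivAt_const s y).prodMk (hasDerivAt_id s))
    simpa [Function.comp_def, Function.uncurry] using h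
  -- second partial x derivative
  have hA2 : ∀ y s : ℝ, HasDerivAt (fun z => fderiv ℝ (Function.uncurry Ψ) (z, s) (1, 0))
      ((fderiv ℝ (fderiv ℝ (Function.uncurry Ψ)) (y, s) (1, 0)) (1, 0)) y := by
    intro y s
    have h1 : HasDerivAt (fun z : ℝ => fderiv ℝ (Function.uncurry Ψ) (z, s))
        (fderiv ℝ (fderiv ℝ (Function.uncurry Ψ)) (y, s) (1, 0)) y := by
      have h := (hF'd (y, s)).hasFDerivAt.comp_hasDerivAt y
        ((hasDerivAt_id y).prodMk (hasDerivAt_const y s))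
      simpa [Function.comp_def] using h
    simpa using h1.clm_apply (hasDerivAt_const y ((1 : ℝ), (0 : ℝ)))
  -- Schrödinger equation in terms of partial derivatives
  have hSE' : ∀ y s : ℝ, Complex.I * (hbar : ℂ) * fderiv ℝ (Function.uncurry Ψ) (y, s) (0, 1)
      = -((hbar : ℂ) ^ 2 / (2 * (m : ℂ)))
        * ((fderiv ℝ (fderiv ℝ (Function.uncurry Ψ)) (y, s) (1, 0)) (1, 0)) := by
    intro y s
    have h := hSE y s
    rw [(hBt y s).deriv] at h
    rw [show (deriv fun z => Ψ z s) = fun z => fderiv ℝ (Function.uncurry Ψ) (z, s) (1, 0)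
        from funext fun z => (hAx z s).deriv] at h
    rw [(hA2 y s).deriv] at h
    exact h
  -- phase factor x-derivative
  have hE : ∀ z s : ℝ, HasDerivAt
      (fun z : ℝ => Complex.exp (Complex.I * ((m / hbar) *
        (g * s * z - (1 / 6) * g ^ 2 * s ^ 3) : ℝ)))
      (Complex.exp (Complex.I * ((m / hbar) *
        (g * s * z - (1 / 6) * g ^ 2 * s ^ 3) : ℝ))
        * (Complex.I * ((m / hbar * (g * s) : ℝ) : ℂ))) z := by
    intro z s
    have hθ : HasDerivAt (fun z : ℝ => (m / hbar) * (g * s * z - (1 / 6) * g ^ 2 * s ^ 3))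
        (m / hbar * (g * s)) z := by
      have h1 : HasDerivAt (fun z : ℝ => g * s * z - (1 / 6) * g ^ 2 * s ^ 3) (g * s) z := by
        simpa using ((hasDerivAt_id z).const_mul (g * s)).sub_const ((1 / 6) * g ^ 2 * s ^ 3)
      simpa using h1.const_mul (m / hbar)
    exact (hθ.ofReal_comp.const_mul Complex.I).cexp
  -- shifted first x partial
  have hAxc : ∀ (z s : ℝ), HasDerivAt (fun z : ℝ => Ψ (z - (1 / 2) * g * s ^ 2) s)
      (fderiv ℝ (Function.uncurry Ψ) (z - (1 / 2) * g * s ^ 2, s) (1, 0)) z := by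
    intro z s
    have hsub : HasDerivAt (fun z' : ℝ => z' - (1 / 2) * g * s ^ 2) 1 z :=
      (hasDerivAt_id z).sub_const _
    have h := (hAx (z - (1 / 2) * g * s ^ 2) s).scomp z hsub
    simpa [Function.comp_def] using h
  -- x-derivative of Ψt
  have hDX : ∀ z s : ℝ, HasDerivAt (fun z => Ψt z s)
      (fderiv ℝ (Function.uncurry Ψ) (z - (1 / 2) * g * s ^ 2, s) (1, 0)
          * Complex.exp (Complex.I * ((m / hbar) *
            (g * s * z - (1 / 6) * g ^ 2 * s ^ 3) : ℝ))
        + Ψ (z - (1 / 2) * g * s ^ 2) s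
          * (Complex.exp (Complex.I * ((m / hbar) *
              (g * s * z - (1 / 6) * g ^ 2 * s ^ 3) : ℝ))
            * (Complex.I * ((m / hbar * (g * s) : ℝ) : ℂ)))) z := by
    intro z s
    exact ((hAxc z s).mul (hE z s)).congr_of_eventuallyEq
      (Filter.Eventually.of_forall fun z' => hΨt z' s)
  intro x t
  -- second x-derivative pieces
  have hA2c : HasDerivAt (fun z : ℝ => fderiv ℝ (Function.uncurry Ψ) (z - (1 / 2) * g * t ^ 2, t) (1, 0))
      ((fderiv ℝ (fderiv ℝ (Function.uncurry Ψ)) (x - (1 / 2) * g * t ^ 2, t) (1, 0)) (1, 0)) x := by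
    have hsub : HasDerivAt (fun z' : ℝ => z' - (1 / 2) * g * t ^ 2) 1 x :=
      (hasDerivAt_id x).sub_const _
    have h := (hA2 (x - (1 / 2) * g * t ^ 2) t).scomp x hsub
    simpa [Function.comp_def] using h
  have hD2 : HasDerivAt (fun z : ℝ =>
      fderiv ℝ (Function.uncurry Ψ) (z - (1 / 2) * g * t ^ 2, t) (1, 0)
          * Complex.exp (Complex.I * ((m / hbar) *
            (g * t * z - (1 / 6) * g ^ 2 * t ^ 3) : ℝ))
        + Ψ (z - (1 / 2) * g * t ^ 2) t
          * (Complex.exp (Complex.I * ((m / hbar) *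
              (g * t * z - (1 / 6) * g ^ 2 * t ^ 3) : ℝ))
            * (Complex.I * ((m / hbar * (g * t) : ℝ) : ℂ))))
      (((fderiv ℝ (fderiv ℝ (Function.uncurry Ψ)) (x - (1 / 2) * g * t ^ 2, t) (1, 0)) (1, 0)
          * Complex.exp (Complex.I * ((m / hbar) *
            (g * t * x - (1 / 6) * g ^ 2 * t ^ 3) : ℝ))
        + fderiv ℝ (Function.uncurry Ψ) (x - (1 / 2) * g * t ^ 2, t) (1, 0)
          * (Complex.exp (Complex.I * ((m / hbar) *
              (g * t * x - (1 / 6) * g ^ 2 * t ^ 3) : ℝ))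
            * (Complex.I * ((m / hbar * (g * t) : ℝ) : ℂ))))
        + (fderiv ℝ (Function.uncurry Ψ) (x - (1 / 2) * g * t ^ 2, t) (1, 0)
            * (Complex.exp (Complex.I * ((m / hbar) *
                (g * t * x - (1 / 6) * g ^ 2 * t ^ 3) : ℝ))
              * (Complex.I * ((m / hbar * (g * t) : ℝ) : ℂ)))
          + Ψ (x - (1 / 2) * g * t ^ 2) t
            * (Complex.exp (Complex.I * ((m / hbar) *
                (g * t * x - (1 / 6) * g ^ 2 * t ^ 3) : ℝ))
              * (Complex.I * ((m / hbar * (g * t) : ℝ) : ℂ))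
              * (Complex.I * ((m / hbar * (g * t) : ℝ) : ℂ))))) x :=
    (hA2c.mul (hE x t)).add ((hAxc x t).mul ((hE x t).mul_const _))
  -- time derivative of Ψt x
  have hct : HasDerivAt (fun s : ℝ => x - (1 / 2) * g * s ^ 2) (-(g * t)) t := by
    have h := ((hasDerivAt_pow 2 t).const_mul ((1 / 2) * g)).const_sub x
    convert h using 1
    all_goals first | rfl | (norm_num; ring)
  have hcurveT : HasDerivAt (fun s : ℝ => Ψ (x - (1 / 2) * g * s ^ 2) s)
      (fderiv ℝ (Function.uncurry Ψ) (x - (1 / 2) * g * t ^ 2, t) (-(g * t), 1)) t := by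
    have hγ : HasDerivAt (fun s : ℝ => ((x - (1 / 2) * g * s ^ 2, s) : ℝ × ℝ))
        ((-(g * t), 1) : ℝ × ℝ) t := hct.prodMk (hasDerivAt_id t)
    have h : HasDerivAt ((Function.uncurry Ψ) ∘ (fun s : ℝ => ((x - (1 / 2) * g * s ^ 2, s) : ℝ × ℝ)))
        (fderiv ℝ (Function.uncurry Ψ) (x - (1 / 2) * g * t ^ 2, t) (-(g * t), 1)) t :=
      HasFDerivAt.comp_hasDerivAt t ((hFd _).hasFDerivAt) hγ
    simpa [Function.comp_def, Function.uncurry] using h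
  have hθt : HasDerivAt (fun s : ℝ => (m / hbar) * (g * s * x - (1 / 6) * g ^ 2 * s ^ 3))
      (m / hbar * (g * x - (1 / 2) * g ^ 2 * t ^ 2)) t := by
    have h1 : HasDerivAt (fun s : ℝ => g * s * x) (g * x) t := by
      simpa using ((hasDerivAt_id t).const_mul g).mul_const x
    have h2 : HasDerivAt (fun s : ℝ => (1 / 6) * g ^ 2 * s ^ 3) ((1 / 2) * g ^ 2 * t ^ 2) t := by
      have h := (hasDerivAt_pow 3 t).const_mul ((1 / 6) * g ^ 2)
      convert h using 1
      all_goals first | rfl | (norm_num; ring)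
    exact (h1.sub h2).const_mul (m / hbar)
  have hEt : HasDerivAt (fun s : ℝ => Complex.exp (Complex.I * ((m / hbar) *
        (g * s * x - (1 / 6) * g ^ 2 * s ^ 3) : ℝ)))
      (Complex.exp (Complex.I * ((m / hbar) *
        (g * t * x - (1 / 6) * g ^ 2 * t ^ 3) : ℝ))
        * (Complex.I * ((m / hbar * (g * x - (1 / 2) * g ^ 2 * t ^ 2) : ℝ) : ℂ))) t :=
    (hθt.ofReal_comp.const_mul Complex.I).cexp
  have hDT : HasDerivAt (fun s => Ψt x s)
      (fderiv ℝ (Function.uncurry Ψ) (x - (1 / 2) * g * t ^ 2, t) (-(g * t), 1)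
          * Complex.exp (Complex.I * ((m / hbar) *
            (g * t * x - (1 / 6) * g ^ 2 * t ^ 3) : ℝ))
        + Ψ (x - (1 / 2) * g * t ^ 2) t
          * (Complex.exp (Complex.I * ((m / hbar) *
              (g * t * x - (1 / 6) * g ^ 2 * t ^ 3) : ℝ))
            * (Complex.I * ((m / hbar * (g * x - (1 / 2) * g ^ 2 * t ^ 2) : ℝ) : ℂ)))) t :=
    (hcurveT.mul hEt).congr_of_eventuallyEq
      (Filter.Eventually.of_forall fun s => hΨt x s)
  -- split the directional derivative
  have hsplit : fderiv ℝ (Function.uncurry Ψ) (x - (1 / 2) * g * t ^ 2, t) (-(g * t), 1)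
      = -((g : ℂ) * t) * fderiv ℝ (Function.uncurry Ψ) (x - (1 / 2) * g * t ^ 2, t) (1, 0)
        + fderiv ℝ (Function.uncurry Ψ) (x - (1 / 2) * g * t ^ 2, t) (0, 1) := by
    have hv : ((-(g * t), (1 : ℝ)) : ℝ × ℝ)
        = (-(g * t)) • ((1 : ℝ), (0 : ℝ)) + ((0 : ℝ), (1 : ℝ)) := by
      simp
    rw [hv, map_add, map_smul, Complex.real_smul]
    push_cast
    ring
  -- rewrite the goal
  rw [hDT.deriv,
    show (deriv fun y => Ψt y t) = _ from funext fun z => (hDX z t).deriv,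
    hD2.deriv, hΨt x t, hsplit]
  set A := fderiv ℝ (Function.uncurry Ψ) (x - (1 / 2) * g * t ^ 2, t) (1, 0) with hA
  set B := fderiv ℝ (Function.uncurry Ψ) (x - (1 / 2) * g * t ^ 2, t) (0, 1) with hB
  set C := (fderiv ℝ (fderiv ℝ (Function.uncurry Ψ)) (x - (1 / 2) * g * t ^ 2, t) (1, 0)) (1, 0) with hC
  set P := Ψ (x - (1 / 2) * g * t ^ 2) t with hP
  set E := Complex.exp (Complex.I * ((m / hbar) * (g * t * x - (1 / 6) * g ^ 2 * t ^ 3) : ℝ)) with hEe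
  have hse := hSE' (x - (1 / 2) * g * t ^ 2) t
  rw [← hB, ← hC] at hse
  have hse2 : Complex.I * (hbar:ℂ) * B * (2 * (m:ℂ)) = -((hbar:ℂ) ^ 2 * C) := by
    field_simp at hse
    linear_combination (hbar:ℂ) * hse
  push_cast
  rw [eq_sub_iff_add_eq]
  field_simp [hbar0, hm0]
  linear_combination E * hse2
    + (2 * (m:ℂ) ^ 2 * (g:ℂ) * (x:ℂ) * P * E) * Complex.I_sq
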